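/- arXiv:math/0601309 — 3 statements merged into one kernel-verified Lean document; each statement's English description precedes it below -/
import Mathlib

section
/- For all nonnegative integers m and n, (q;q)_m · (q;q)_n = Σ_{k=-n-1}^{m} (-1)^k · k · q^{binom(k+1,2)} · [m+n+1 choose n+k+1]_q, where (q;q)_r = ∏_{i=1}^{r} (1 - q^i) and [a choose b]_q denotes the Gaussian binomial coefficient. This is an identity of polynomials in q (equivalently, it holds for all complex q, or formally in ℤ[q]). -/
open Finset

/-- The q-shifted factorial `(q;q)_r = ∏_{i=1}^r (1 - q^i)` in `ℚ(q)`. -/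
noncomputable def qPoch (r : ℕ) : RatFunc ℚ :=
  ∏ i ∈ Finset.range r, (1 - (RatFunc.X : RatFunc ℚ) ^ (i + 1))

/-- The Gaussian binomial coefficient `[a choose b]_q`, zero outside `0 ≤ b ≤ a`. -/
noncomputable def qbinom (a : ℕ) (b : ℤ) : RatFunc ℚ :=
  if 0 ≤ b ∧ b ≤ (a : ℤ) then qPoch a / (qPoch b.toNat * qPoch (a - b.toNat)) else 0

namespace FJ

local notation "Xq" => (RatFunc.X : RatFunc ℚ)



lemma Xne : Xq ≠ 0 := RatFunc.X_ne_zero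

lemma one_sub_ne (i : ℕ) : (1 - Xq ^ (i + 1)) ≠ 0 := by
  intro h
  have hx : Xq ^ (i + 1) = 1 := by linear_combination -h
  rw [← RatFunc.algebraMap_X, ← map_pow, ← map_one (algebraMap (Polynomial ℚ) (RatFunc ℚ))] at hx
  have := RatFunc.algebraMap_injective ℚ hx
  have h2 := congrArg Polynomial.natDegree this
  simp [Polynomial.natDegree_X_pow] at h2

lemma qPoch_ne_zero (r : ℕ) : qPoch r ≠ 0 :=
  Finset.prod_ne_zero_iff.mpr fun i _ => one_sub_ne i

lemma qPoch_succ (r : ℕ) : qPoch (r + 1) = qPoch r * (1 - Xq ^ (r + 1)) :=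
  Finset.prod_range_succ _ _

noncomputable def B (a b : ℕ) : RatFunc ℚ := qbinom a (b : ℤ)

lemma B_def (a b : ℕ) : B a b = if b ≤ a then qPoch a / (qPoch b * qPoch (a - b)) else 0 := by
  simp [B, qbinom]

lemma qPoch_zero : qPoch 0 = 1 := rfl

lemma B_zero (a : ℕ) : B a 0 = 1 := by
  simp [B_def, qPoch_zero, div_self (qPoch_ne_zero a)]

lemma B_self (a : ℕ) : B a a = 1 := by
  simp [B_def, qPoch_zero, div_self (qPoch_ne_zero a)]

lemma B_gt {a b : ℕ} (h : a < b) : B a b = 0 := by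
  simp [B_def, Nat.not_le.mpr h]

lemma pascal (N b : ℕ) (hb : b ≤ N) :
    B (N + 1) (b + 1) = B N (b + 1) + Xq ^ (N - b) * B N b := by
  rcases eq_or_lt_of_le hb with rfl | hlt
  · simp [B_self, B_gt (Nat.lt_succ_self b)]
  · -- b + 1 ≤ N, write N = b + d + 1
    obtain ⟨d, rfl⟩ : ∃ d, N = b + d + 1 := ⟨N - b - 1, by omega⟩
    rw [B_def, B_def, B_def]
    rw [if_pos (by omega), if_pos (by omega), if_pos (by omega)]
    have e1 : b + d + 1 + 1 - (b + 1) = d + 1 := by omega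
    have e2 : b + d + 1 - (b + 1) = d := by omega
    have e3 : b + d + 1 - b = d + 1 := by omega
    rw [e1, e2, e3]
    rw [show b + d + 1 + 1 = (b + d + 1) + 1 from rfl, qPoch_succ (b + d + 1),
        qPoch_succ b, qPoch_succ d]
    have hb0 := qPoch_ne_zero b
    have hd0 := qPoch_ne_zero d
    have hN0 := qPoch_ne_zero (b + d + 1)
    have h1 := one_sub_ne b
    have h2 := one_sub_ne d
    field_simp
    ring


/-- c2 k = k(k-1)/2 -/
def c2 : ℕ → ℕ
  | 0 => 0
  | k + 1 => c2 k + k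

lemma two_c2 (k : ℕ) : 2 * c2 k = k * (k - 1) := by
  induction k with
  | zero => rfl
  | succ k ih =>
    have : 2 * c2 (k + 1) = k * (k - 1) + 2 * k := by simp [c2]; omega
    rw [this]
    cases k with
    | zero => rfl
    | succ s => simp only [Nat.add_sub_cancel]; ring

noncomputable def t (n k : ℕ) : RatFunc ℚ :=
  (-1 : RatFunc ℚ) ^ k * Xq ^ ((c2 k : ℤ) - n * k)

lemma t_succ {n j N : ℕ} (h : j ≤ N) :
    t n (j + 1) * Xq ^ (N - j) = -Xq ^ ((N : ℤ) - n) * t n j := by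
  rw [t, t, show ((N - j : ℕ)) = ((N : ℤ) - j).toNat from by omega]
  rw [← zpow_natCast Xq (((N : ℤ) - j).toNat), Int.toNat_of_nonneg (by omega)]
  have : (c2 (j + 1) : ℤ) - (n : ℤ) * ((j + 1 : ℕ) : ℤ) + ((N : ℤ) - j) =
      ((N : ℤ) - n) + ((c2 j : ℤ) - n * j) := by
    have : c2 (j + 1) = c2 j + j := rfl
    push_cast [this]; ring
  rw [mul_assoc, ← zpow_add₀ Xne, this, zpow_add₀ Xne, pow_succ]
  ring

noncomputable def F (n N : ℕ) : RatFunc ℚ :=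
  ∑ k ∈ Finset.range (N + 1), t n k * B N k

noncomputable def G (n N : ℕ) : RatFunc ℚ :=
  ∑ k ∈ Finset.range (N + 1), (k : RatFunc ℚ) * t n k * B N k

lemma F_succ (n N : ℕ) : F n (N + 1) = (1 - Xq ^ ((N : ℤ) - n)) * F n N := by
  rw [F, Finset.sum_range_succ']
  have step : ∀ j ∈ Finset.range (N + 1),
      t n (j + 1) * B (N + 1) (j + 1) =
        t n (j + 1) * B N (j + 1) + (-Xq ^ ((N : ℤ) - n) * t n j) * B N j := by
    intro j hj
    rw [pascal N j (by simpa using Nat.lt_succ_iff.mp (Finset.mem_range.mp hj))]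
    rw [mul_add, ← mul_assoc, t_succ (Nat.lt_succ_iff.mp (Finset.mem_range.mp hj))]
  rw [Finset.sum_congr rfl step, Finset.sum_add_distrib]
  have hB0 : B (N + 1) 0 = B N 0 := by rw [B_zero, B_zero]
  rw [hB0]
  have recomb : (∑ j ∈ Finset.range (N + 1), t n (j + 1) * B N (j + 1)) + t n 0 * B N 0
      = F n N := by
    rw [← Finset.sum_range_succ' (fun k => t n k * B N k) (N + 1), F,
        Finset.sum_range_succ, B_gt (Nat.lt_succ_self N), mul_zero, add_zero]
  have pull : ∑ j ∈ Finset.range (N + 1), (-Xq ^ ((N : ℤ) - n) * t n j) * B N j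
      = -Xq ^ ((N : ℤ) - n) * F n N := by
    rw [F, Finset.mul_sum]; exact Finset.sum_congr rfl fun j _ => by ring
  rw [add_right_comm, recomb, pull]; ring

lemma G_succ (n N : ℕ) :
    G n (N + 1) = (1 - Xq ^ ((N : ℤ) - n)) * G n N - Xq ^ ((N : ℤ) - n) * F n N := by
  rw [G, Finset.sum_range_succ']
  have step : ∀ j ∈ Finset.range (N + 1),
      ((j : RatFunc ℚ) + 1) * t n (j + 1) * B (N + 1) (j + 1) =
        ((j : RatFunc ℚ) + 1) * t n (j + 1) * B N (j + 1) +
          (-Xq ^ ((N : ℤ) - n) * ((j : RatFunc ℚ) * t n j) +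
           -Xq ^ ((N : ℤ) - n) * t n j) * B N j := by
    intro j hj
    have hjN : j ≤ N := Nat.lt_succ_iff.mp (Finset.mem_range.mp hj)
    rw [pascal N j hjN, mul_add]
    congr 1
    have := t_succ (n := n) hjN
    calc ((j : RatFunc ℚ) + 1) * t n (j + 1) * (Xq ^ (N - j) * B N j)
        = ((j : RatFunc ℚ) + 1) * (t n (j + 1) * Xq ^ (N - j)) * B N j := by ring
      _ = _ := by rw [this]; ring
  push_cast
  rw [Finset.sum_congr rfl step, Finset.sum_add_distrib]
  have recomb : (∑ j ∈ Finset.range (N + 1), ((j : RatFunc ℚ) + 1) * t n (j + 1) * B N (j + 1))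
      + (0 : RatFunc ℚ) * t n 0 * B (N + 1) 0 = G n N := by
    rw [zero_mul, zero_mul, add_zero]
    have : ∀ j : ℕ, ((j : RatFunc ℚ) + 1) * t n (j + 1) * B N (j + 1)
        = (fun k : ℕ => (k : RatFunc ℚ) * t n k * B N k) (j + 1) := by
      intro j; push_cast; ring
    rw [Finset.sum_congr rfl fun j _ => this j]
    rw [← add_zero (∑ j ∈ Finset.range (N+1), _)]
    rw [show (0 : RatFunc ℚ) = (fun k : ℕ => (k : RatFunc ℚ) * t n k * B N k) 0 from by simp]
    rw [← Finset.sum_range_succ' (fun k => (k : RatFunc ℚ) * t n k * B N k) (N + 1), G,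
        Finset.sum_range_succ, B_gt (Nat.lt_succ_self N), mul_zero, add_zero]
  have pull : ∑ j ∈ Finset.range (N + 1),
      (-Xq ^ ((N : ℤ) - n) * ((j : RatFunc ℚ) * t n j) + -Xq ^ ((N : ℤ) - n) * t n j) * B N j
      = -(Xq ^ ((N : ℤ) - n)) * G n N + -(Xq ^ ((N : ℤ) - n)) * F n N := by
    rw [G, F, Finset.mul_sum, Finset.mul_sum, ← Finset.sum_add_distrib]
    exact Finset.sum_congr rfl fun j _ => by ring
  rw [add_right_comm, recomb, pull]; ring

lemma F_closed (n N : ℕ) : F n N = ∏ i ∈ Finset.range N, (1 - Xq ^ ((i : ℤ) - n)) := by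
  induction N with
  | zero =>
    simp [F, t, B_zero, c2]
  | succ N ih =>
    rw [F_succ, ih, Finset.prod_range_succ]; ring

lemma F_eq_zero {n N : ℕ} (h : n < N) : F n N = 0 := by
  rw [F_closed]
  exact Finset.prod_eq_zero (Finset.mem_range.mpr h) (by simp)

lemma G_closed (n m : ℕ) :
    G n (n + 1 + m) = -qPoch m * ∏ i ∈ Finset.range n, (1 - Xq ^ ((i : ℤ) - n)) := by
  induction m with
  | zero =>
    rw [show n + 1 + 0 = n + 1 from rfl, G_succ]
    rw [show ((n : ℤ) - n) = 0 from by ring, zpow_zero]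
    rw [F_closed]
    simp [qPoch]
  | succ m ih =>
    rw [show n + 1 + (m + 1) = (n + 1 + m) + 1 from rfl, G_succ, ih,
        F_eq_zero (show n < n + 1 + m by omega), qPoch_succ]
    have : ((n + 1 + m : ℕ) : ℤ) - n = ((m + 1 : ℕ) : ℤ) := by push_cast; ring
    rw [this, zpow_natCast]
    ring

lemma prod_neg_aux (n : ℕ) :
    ∏ i ∈ Finset.range n, (1 - Xq ^ (-((i : ℤ) + 1))) =
      (-1 : RatFunc ℚ) ^ n * Xq ^ (-(c2 (n + 1) : ℤ)) * qPoch n := by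
  induction n with
  | zero => simp [c2, qPoch]
  | succ n ih =>
    rw [Finset.prod_range_succ, ih, qPoch_succ]
    have key : (1 - Xq ^ (-((n : ℤ) + 1))) =
        -Xq ^ (-((n : ℤ) + 1)) * (1 - Xq ^ (n + 1)) := by
      have hx : Xq ^ (-((n : ℤ) + 1)) * Xq ^ (n + 1 : ℕ) = 1 := by
        rw [← zpow_natCast Xq (n + 1), ← zpow_add₀ Xne]
        rw [show (-((n : ℤ) + 1)) + ((n + 1 : ℕ) : ℤ) = 0 from by push_cast; ring, zpow_zero]
      set a := Xq ^ (-((n : ℤ) + 1)) with ha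
      linear_combination -hx
    rw [key]
    have expn : Xq ^ (-(c2 (n + 1) : ℤ)) * Xq ^ (-((n : ℤ) + 1)) =
        Xq ^ (-(c2 (n + 1 + 1) : ℤ)) := by
      rw [← zpow_add₀ Xne]
      congr 1
      have : c2 (n + 1 + 1) = c2 (n + 1) + (n + 1) := rfl
      rw [this]; push_cast; ring
    calc (-1 : RatFunc ℚ) ^ n * Xq ^ (-(c2 (n + 1) : ℤ)) * qPoch n *
          (-Xq ^ (-((n : ℤ) + 1)) * (1 - Xq ^ (n + 1)))
        = (-1 : RatFunc ℚ) ^ (n + 1) * (Xq ^ (-(c2 (n + 1) : ℤ)) * Xq ^ (-((n : ℤ) + 1))) *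
            (qPoch n * (1 - Xq ^ (n + 1))) := by ring
      _ = _ := by rw [expn]

lemma prod_neg (n : ℕ) :
    ∏ i ∈ Finset.range n, (1 - Xq ^ ((i : ℤ) - n)) =
      (-1 : RatFunc ℚ) ^ n * Xq ^ (-(c2 (n + 1) : ℤ)) * qPoch n := by
  rw [← prod_neg_aux n, ← Finset.prod_range_reflect]
  refine Finset.prod_congr rfl fun i hi => ?_
  have hi' := Finset.mem_range.mp hi
  have he : (((n - 1 - i : ℕ) : ℤ)) - (n : ℤ) = -((i : ℤ) + 1) := by omega
  rw [he]


lemma two_c2_int (k : ℕ) : (c2 k : ℤ) * 2 = k * ((k : ℤ) - 1) := by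
  induction k with
  | zero => simp [c2]
  | succ k ih => show ((c2 k + k : ℕ) : ℤ) * 2 = _; push_cast; push_cast at ih; linarith [ih]

lemma term_eq (m n k : ℕ) :
    (-1 : RatFunc ℚ) ^ ((k : ℤ) - (n : ℤ) - 1) * (((k : ℤ) - (n : ℤ) - 1 : ℤ) : RatFunc ℚ) *
        Xq ^ (((k : ℤ) - (n : ℤ) - 1) * (((k : ℤ) - (n : ℤ) - 1) + 1) / 2) *
          qbinom (m + n + 1) ((n : ℤ) + ((k : ℤ) - (n : ℤ) - 1) + 1) =
      ((-1 : RatFunc ℚ) ^ (n + 1) * Xq ^ ((c2 (n + 1) : ℤ))) *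
        (((k : RatFunc ℚ) - ((n : RatFunc ℚ) + 1)) * t n k * B (m + n + 1) k) := by
  rw [show (n : ℤ) + ((k : ℤ) - (n : ℤ) - 1) + 1 = (k : ℤ) from by ring]
  have hqb : qbinom (m + n + 1) ((k : ℕ) : ℤ) = B (m + n + 1) k := rfl
  rw [hqb]
  have hsign : (-1 : RatFunc ℚ) ^ ((k : ℤ) - (n : ℤ) - 1) =
      (-1 : RatFunc ℚ) ^ k * (-1 : RatFunc ℚ) ^ (n + 1) := by
    rw [show (k : ℤ) - (n : ℤ) - 1 = (k : ℤ) - ((n + 1 : ℕ) : ℤ) from by push_cast; ring,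
        zpow_sub₀ (by norm_num : (-1 : RatFunc ℚ) ≠ 0), zpow_natCast, zpow_natCast,
        div_eq_mul_inv, ← inv_pow]
    norm_num
  have hmul : ((k : ℤ) - (n : ℤ) - 1) * (((k : ℤ) - (n : ℤ) - 1) + 1) =
      2 * (((c2 k : ℤ) - (n : ℤ) * k) + (c2 (n + 1) : ℤ)) := by
    have h1 := two_c2_int k
    have h2 := two_c2_int (n + 1)
    push_cast at h2 ⊢
    linear_combination -h1 - h2
  have hexp : ((k : ℤ) - (n : ℤ) - 1) * (((k : ℤ) - (n : ℤ) - 1) + 1) / 2 =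
      ((c2 k : ℤ) - (n : ℤ) * k) + (c2 (n + 1) : ℤ) := by
    rw [hmul]
    exact Int.mul_ediv_cancel_left _ (by norm_num)
  rw [hsign, hexp, zpow_add₀ Xne, t]
  push_cast
  ring


end FJ

open FJ in
/-- Finite form of Jacobi's identity (Theorem 2.1):
`(q;q)_m (q;q)_n = Σ_{k=-n-1}^{m} (-1)^k k q^{C(k+1,2)} [m+n+1, n+k+1]_q`. -/
theorem finite_jacobi (m n : ℕ) :
    qPoch m * qPoch n =
      ∑ k ∈ Finset.Icc (-(n : ℤ) - 1) (m : ℤ),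
        (-1 : RatFunc ℚ) ^ k * (k : RatFunc ℚ) *
          (RatFunc.X : RatFunc ℚ) ^ (k * (k + 1) / 2) *
            qbinom (m + n + 1) ((n : ℤ) + k + 1) := by
  have hIcc : Finset.Icc (-(n : ℤ) - 1) (m : ℤ) =
      Finset.map ⟨fun k : ℕ => (k : ℤ) - (n : ℤ) - 1, show Function.Injective (fun k : ℕ => (k : ℤ) - (n : ℤ) - 1) from fun a b h => by simpa using h⟩
        (Finset.range (m + n + 2)) := by
    ext x
    simp only [Finset.mem_Icc, Finset.mem_map, Finset.mem_range, Function.Embedding.coeFn_mk]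
    constructor
    · intro hx; exact ⟨(x + n + 1).toNat, by omega, by omega⟩
    · rintro ⟨a, ha, rfl⟩; omega
  rw [hIcc, Finset.sum_map]
  simp only [Function.Embedding.coeFn_mk]
  rw [Finset.sum_congr rfl fun k _ => term_eq m n k, ← Finset.mul_sum]
  have hsplit : ∑ k ∈ Finset.range (m + n + 2),
      ((k : RatFunc ℚ) - ((n : RatFunc ℚ) + 1)) * t n k * B (m + n + 1) k =
        G n (m + n + 1) - ((n : RatFunc ℚ) + 1) * F n (m + n + 1) := by
    rw [G, F, Finset.mul_sum, ← Finset.sum_sub_distrib]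
    exact Finset.sum_congr rfl fun k _ => by ring
  rw [hsplit, F_eq_zero (show n < m + n + 1 by omega), mul_zero, sub_zero]
  have hG : G n (m + n + 1) =
      -qPoch m * ((-1 : RatFunc ℚ) ^ n * (RatFunc.X : RatFunc ℚ) ^ (-(c2 (n + 1) : ℤ)) * qPoch n) := by
    rw [show m + n + 1 = n + 1 + m from by omega, G_closed, prod_neg]
  rw [hG]
  have h1 : (-1 : RatFunc ℚ) ^ n * (-1 : RatFunc ℚ) ^ n = 1 := by
    rw [← mul_pow]; norm_num
  have hab : (RatFunc.X : RatFunc ℚ) ^ ((c2 (n + 1) : ℤ)) * (RatFunc.X : RatFunc ℚ) ^ (-(c2 (n + 1) : ℤ)) = 1 := by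
    rw [← zpow_add₀ Xne]; simp
  have : ((-1 : RatFunc ℚ) ^ (n + 1) * (RatFunc.X : RatFunc ℚ) ^ ((c2 (n + 1) : ℤ))) *
      (-qPoch m * ((-1 : RatFunc ℚ) ^ n * (RatFunc.X : RatFunc ℚ) ^ (-(c2 (n + 1) : ℤ)) * qPoch n)) =
        ((-1 : RatFunc ℚ) ^ n * (-1 : RatFunc ℚ) ^ n) *
          ((RatFunc.X : RatFunc ℚ) ^ ((c2 (n + 1) : ℤ)) * (RatFunc.X : RatFunc ℚ) ^ (-(c2 (n + 1) : ℤ))) * (qPoch m * qPoch n) := by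
    rw [pow_succ]; ring
  rw [this, h1, hab, one_mul, one_mul]
end

section
/- For every nonnegative integer n, ((q;q)_n)^2 = Σ_{k=0}^{n} (-1)^k · (2k+1) · q^{binom(k+1,2)} · [2n+1 choose n+k+1]_q, as an identity of polynomials in q. -/
open Finset

local notation "Xq" => (RatFunc.X : RatFunc ℚ)

lemma one_sub_X_pow_ne_zero {m : ℕ} (hm : m ≠ 0) : (1 : RatFunc ℚ) - Xq ^ m ≠ 0 := by
  intro h
  have hx : Xq ^ m = 1 := by linear_combination -h
  rw [← RatFunc.algebraMap_X, ← map_pow, ← map_one (algebraMap (Polynomial ℚ) (RatFunc ℚ))] at hx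
  have := RatFunc.algebraMap_injective ℚ hx
  have hd := congrArg Polynomial.natDegree this
  simp [Polynomial.natDegree_X_pow] at hd
  exact hm hd

lemma qPoch_zero : qPoch 0 = 1 := by simp [qPoch]

lemma qPoch_succ (m : ℕ) : qPoch (m + 1) = qPoch m * (1 - Xq ^ (m + 1)) := by
  simp [qPoch, Finset.prod_range_succ]

lemma qPoch_ne_zero (m : ℕ) : qPoch m ≠ 0 := by
  induction m with
  | zero => simp [qPoch_zero]
  | succ m ih =>
    rw [qPoch_succ]
    exact mul_ne_zero ih (one_sub_X_pow_ne_zero (Nat.succ_ne_zero m))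

lemma qbinom_nat (a b : ℕ) (h : b ≤ a) :
    qbinom a (b : ℤ) = qPoch a / (qPoch b * qPoch (a - b)) := by
  rw [qbinom, if_pos ⟨Int.ofNat_nonneg b, Int.ofNat_le.mpr h⟩, Int.toNat_natCast]

lemma qbinom_high (a : ℕ) (b : ℤ) (h : (a : ℤ) < b) : qbinom a b = 0 := by
  rw [qbinom, if_neg]; rintro ⟨-, h2⟩; omega

/-- the summand -/
noncomputable def tt (n k : ℕ) : RatFunc ℚ :=
  (-1 : RatFunc ℚ) ^ k * ((2 * k + 1 : ℕ) : RatFunc ℚ) *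
    Xq ^ (k * (k + 1) / 2) * qbinom (2 * n + 1) ((n : ℤ) + k + 1)

/-- the telescoping certificate -/
noncomputable def gg (n k : ℕ) : RatFunc ℚ :=
  (-1 : RatFunc ℚ) ^ (k + 1) * Xq ^ (k * (k + 1) / 2 + (n + 1 - k)) *
    ( ((2 * k + 1 : ℕ) : RatFunc ℚ) * qbinom (2 * n + 1) ((n : ℤ) + k)
      + ((2 * (k : ℤ) - 1 : ℤ) : RatFunc ℚ) * Xq ^ k * qbinom (2 * n + 1) ((n : ℤ) + k + 1) )

lemma gg_zero (n : ℕ) : gg n 0 = 0 := by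
  have h1 : ((n : ℤ) + ((0:ℕ):ℤ)) = ((n : ℕ) : ℤ) := by push_cast; ring
  have h2 : ((n : ℤ) + ((0:ℕ):ℤ) + 1) = ((n + 1 : ℕ) : ℤ) := by push_cast; ring
  rw [gg, h2, h1, qbinom_nat _ _ (by omega), qbinom_nat _ _ (by omega),
    show 2 * n + 1 - n = n + 1 by omega, show 2 * n + 1 - (n + 1) = n by omega]
  push_cast
  ring

lemma gg_top (n : ℕ) : gg n (n + 2) = 0 := by
  rw [gg, qbinom_high _ _ (by push_cast; omega), qbinom_high _ _ (by push_cast; omega)]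
  ring

lemma tt_top (n : ℕ) : tt n (n + 1) = 0 := by
  rw [tt, qbinom_high _ _ (by push_cast; omega)]; ring

lemma tri_succ (k : ℕ) : (k + 1) * (k + 1 + 1) / 2 = k * (k + 1) / 2 + (k + 1) := by
  have h : (k + 1) * (k + 1 + 1) = k * (k + 1) + (k + 1) * 2 := by ring
  rw [h, Nat.add_mul_div_right _ _ (by norm_num)]

set_option maxHeartbeats 1600000 in
lemma step (n k : ℕ) (hk : k ≤ n + 1) :
    tt (n + 1) k - (1 - Xq ^ (n + 1)) ^ 2 * tt n k = gg n (k + 1) - gg n k := by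
  have h3 : k + 1 ≤ n ∨ k = n ∨ k = n + 1 := by omega
  rcases h3 with h | rfl | rfl
  · -- generic case
    obtain ⟨d, rfl⟩ : ∃ d, n = k + 1 + d := ⟨n - (k + 1), by omega⟩
    simp only [tt, gg]
    rw [show (((k+1+d+1:ℕ)):ℤ) + (k:ℤ) + 1 = ((2*k+d+3:ℕ):ℤ) by push_cast; ring,
      show (((k+1+d:ℕ)):ℤ) + ((k+1:ℕ):ℤ) + 1 = ((2*k+d+3:ℕ):ℤ) by push_cast; ring,
      show (((k+1+d:ℕ)):ℤ) + ((k+1:ℕ):ℤ) = ((2*k+d+2:ℕ):ℤ) by push_cast; ring,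
      show (((k+1+d:ℕ)):ℤ) + (k:ℤ) + 1 = ((2*k+d+2:ℕ):ℤ) by push_cast; ring,
      show (((k+1+d:ℕ)):ℤ) + (k:ℤ) = ((2*k+d+1:ℕ):ℤ) by push_cast; ring,
      show 2*(k+1+d+1)+1 = 2*k+2*d+5 by ring,
      show 2*(k+1+d)+1 = 2*k+2*d+3 by ring,
      qbinom_nat _ _ (show 2*k+d+3 ≤ 2*k+2*d+5 by omega),
      qbinom_nat _ _ (show 2*k+d+3 ≤ 2*k+2*d+3 by omega),
      qbinom_nat _ _ (show 2*k+d+2 ≤ 2*k+2*d+3 by omega),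
      qbinom_nat _ _ (show 2*k+d+1 ≤ 2*k+2*d+3 by omega),
      show 2*k+2*d+5 - (2*k+d+3) = d+2 by omega,
      show 2*k+2*d+3 - (2*k+d+3) = d by omega,
      show 2*k+2*d+3 - (2*k+d+2) = d+1 by omega,
      show 2*k+2*d+3 - (2*k+d+1) = d+2 by omega,
      show k+1+d+1-k = d+2 by omega,
      show k+1+d+1-(k+1) = d+1 by omega,
      tri_succ k]
    rw [show qPoch (2*k+2*d+5)
          = qPoch (2*k+2*d+3) * ((1 - Xq^(2*k+2*d+4)) * (1 - Xq^(2*k+2*d+5))) by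
        rw [show 2*k+2*d+5 = (2*k+2*d+3)+1+1 by ring, qPoch_succ, qPoch_succ]; ring_nf,
      show qPoch (2*k+d+3)
          = qPoch (2*k+d+1) * ((1 - Xq^(2*k+d+2)) * (1 - Xq^(2*k+d+3))) by
        rw [show 2*k+d+3 = (2*k+d+1)+1+1 by ring, qPoch_succ, qPoch_succ]; ring_nf,
      show qPoch (2*k+d+2) = qPoch (2*k+d+1) * (1 - Xq^(2*k+d+2)) by
        rw [show 2*k+d+2 = (2*k+d+1)+1 by ring, qPoch_succ],
      show qPoch (d+2) = qPoch d * ((1 - Xq^(d+1)) * (1 - Xq^(d+2))) by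
        rw [show d+2 = d+1+1 by ring, qPoch_succ, qPoch_succ]; ring_nf,
      qPoch_succ d]
    have z1 : (1:RatFunc ℚ) - Xq^(2*k+2*d+4) ≠ 0 := one_sub_X_pow_ne_zero (by omega)
    have z2 : (1:RatFunc ℚ) - Xq^(2*k+2*d+5) ≠ 0 := one_sub_X_pow_ne_zero (by omega)
    have z3 : (1:RatFunc ℚ) - Xq^(2*k+d+2) ≠ 0 := one_sub_X_pow_ne_zero (by omega)
    have z4 : (1:RatFunc ℚ) - Xq^(2*k+d+3) ≠ 0 := one_sub_X_pow_ne_zero (by omega)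
    have z5 : (1:RatFunc ℚ) - Xq^(d+1) ≠ 0 := one_sub_X_pow_ne_zero (by omega)
    have z6 : (1:RatFunc ℚ) - Xq^(d+2) ≠ 0 := one_sub_X_pow_ne_zero (by omega)
    have e1 : (Xq)^(2*k+2*d+4) = (Xq^k)^2*(Xq^d)^2*Xq^4 := by ring
    have e2 : (Xq)^(2*k+2*d+5) = (Xq^k)^2*(Xq^d)^2*Xq^5 := by ring
    have e3 : (Xq)^(2*k+d+2) = (Xq^k)^2*(Xq^d)*Xq^2 := by ring
    have e4 : (Xq)^(2*k+d+3) = (Xq^k)^2*(Xq^d)*Xq^3 := by ring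
    have e5 : (Xq)^(d+1) = Xq^d*Xq := by ring
    have e6 : (Xq)^(d+2) = Xq^d*Xq^2 := by ring
    have e7 : (Xq)^(k+1+d+1) = Xq^k*Xq^d*Xq^2 := by ring
    have e8 : (Xq)^(k*(k+1)/2 + (d+2)) = Xq^(k*(k+1)/2)*(Xq^d*Xq^2) := by ring
    have e9 : (Xq)^(k*(k+1)/2 + (k+1) + (d+1)) = Xq^(k*(k+1)/2)*(Xq^k*Xq^d*Xq^2) := by ring
    have e10 : (Xq)^(k+1) = Xq^k*Xq := by ring
    rw [e1] at z1 ⊢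
    rw [e2] at z2 ⊢
    rw [e3] at z3 ⊢
    rw [e4] at z4 ⊢
    rw [e5] at z5 ⊢
    rw [e6] at z6 ⊢
    rw [e7, e8, e9, e10]
    set A := qPoch (2*k+2*d+3) with hA
    set B := qPoch (2*k+d+1) with hB
    set C := qPoch d with hC
    have nA : A ≠ 0 := qPoch_ne_zero _
    have nB : B ≠ 0 := qPoch_ne_zero _
    have nC : C ≠ 0 := qPoch_ne_zero _
    set w1 := (1:RatFunc ℚ) - (Xq^k)^2*(Xq^d)^2*Xq^4 with hw1
    set w2 := (1:RatFunc ℚ) - (Xq^k)^2*(Xq^d)^2*Xq^5 with hw2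
    set w3 := (1:RatFunc ℚ) - (Xq^k)^2*(Xq^d)*Xq^2 with hw3
    set w4 := (1:RatFunc ℚ) - (Xq^k)^2*(Xq^d)*Xq^3 with hw4
    set w5 := (1:RatFunc ℚ) - Xq^d*Xq with hw5
    set w6 := (1:RatFunc ℚ) - Xq^d*Xq^2 with hw6
    clear_value A B C w1 w2 w3 w4 w5 w6
    push_cast
    field_simp [nA, nB, nC, z1, z2, z3, z4, z5, z6]
    rw [hw1, hw2, hw3, hw4, hw5, hw6]
    ring
  · -- case k = n (n has been substituted by k)
    simp only [tt, gg]
    rw [show (((k+1:ℕ)):ℤ) + (k:ℤ) + 1 = ((2*k+2:ℕ):ℤ) by push_cast; ring,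
      show ((k:ℕ):ℤ) + ((k+1:ℕ):ℤ) + 1 = ((2*k+2:ℕ):ℤ) by push_cast; ring,
      show ((k:ℕ):ℤ) + ((k+1:ℕ):ℤ) = ((2*k+1:ℕ):ℤ) by push_cast; ring,
      show ((k:ℕ):ℤ) + (k:ℤ) + 1 = ((2*k+1:ℕ):ℤ) by push_cast; ring,
      show ((k:ℕ):ℤ) + (k:ℤ) = ((2*k:ℕ):ℤ) by push_cast; ring,
      show 2*(k+1)+1 = 2*k+3 by ring,
      qbinom_high (2*k+1) ((2*k+2:ℕ):ℤ) (by push_cast; omega),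
      qbinom_nat _ _ (show 2*k+2 ≤ 2*k+3 by omega),
      qbinom_nat _ _ (show 2*k+1 ≤ 2*k+1 by omega),
      qbinom_nat _ _ (show 2*k ≤ 2*k+1 by omega),
      show 2*k+3 - (2*k+2) = 1 by omega,
      show 2*k+1 - (2*k+1) = 0 by omega,
      show 2*k+1 - 2*k = 1 by omega,
      show k+1-k = 1 by omega,
      show k+1-(k+1) = 0 by omega,
      tri_succ k]
    rw [show qPoch (2*k+3)
          = qPoch (2*k) * ((1 - Xq^(2*k+1)) * ((1 - Xq^(2*k+2)) * (1 - Xq^(2*k+3)))) by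
        rw [show 2*k+3 = (2*k)+1+1+1 by ring, qPoch_succ, qPoch_succ, qPoch_succ]; ring_nf,
      show qPoch (2*k+2) = qPoch (2*k) * ((1 - Xq^(2*k+1)) * (1 - Xq^(2*k+2))) by
        rw [show 2*k+2 = (2*k)+1+1 by ring, qPoch_succ, qPoch_succ]; ring_nf,
      show qPoch (2*k+1) = qPoch (2*k) * (1 - Xq^(2*k+1)) by
        rw [show 2*k+1 = (2*k)+1 by ring, qPoch_succ],
      show qPoch 1 = 1 - Xq^1 by rw [qPoch, Finset.prod_range_one],
      qPoch_zero]
    have z1 : (1:RatFunc ℚ) - Xq^(2*k+1) ≠ 0 := one_sub_X_pow_ne_zero (by omega)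
    have z2 : (1:RatFunc ℚ) - Xq^(2*k+2) ≠ 0 := one_sub_X_pow_ne_zero (by omega)
    have z3 : (1:RatFunc ℚ) - Xq^(2*k+3) ≠ 0 := one_sub_X_pow_ne_zero (by omega)
    have z4 : (1:RatFunc ℚ) - Xq^1 ≠ 0 := one_sub_X_pow_ne_zero (by omega)
    have e1 : (Xq)^(2*k+1) = (Xq^k)^2*Xq := by ring
    have e2 : (Xq)^(2*k+2) = (Xq^k)^2*Xq^2 := by ring
    have e3 : (Xq)^(2*k+3) = (Xq^k)^2*Xq^3 := by ring
    have e5 : (Xq)^(k*(k+1)/2 + 1) = Xq^(k*(k+1)/2)*Xq := by ring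
    have e6 : (Xq)^(k*(k+1)/2 + (k+1) + 0) = Xq^(k*(k+1)/2)*(Xq^k*Xq) := by ring
    have e7 : (Xq)^(k+1) = Xq^k*Xq := by ring
    rw [e1] at z1 ⊢
    rw [e2] at z2 ⊢
    rw [e3] at z3 ⊢
    rw [e5, e6, e7]
    set A := qPoch (2*k) with hA
    have nA : A ≠ 0 := qPoch_ne_zero _
    set w1 := (1:RatFunc ℚ) - (Xq^k)^2*Xq with hw1
    set w2 := (1:RatFunc ℚ) - (Xq^k)^2*Xq^2 with hw2
    set w3 := (1:RatFunc ℚ) - (Xq^k)^2*Xq^3 with hw3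
    set w4 := (1:RatFunc ℚ) - Xq^1 with hw4
    clear_value A w1 w2 w3 w4
    push_cast
    field_simp [nA, z1, z2, z3, z4]
    rw [hw1, hw3, hw4]
    ring
  · -- case k = n + 1
    rw [tt_top, gg_top]
    simp only [tt, gg]
    rw [show (((n+1:ℕ)):ℤ) + ((n+1:ℕ):ℤ) + 1 = ((2*n+3:ℕ):ℤ) by push_cast; ring,
      show ((n:ℕ):ℤ) + ((n+1:ℕ):ℤ) + 1 = ((2*n+2:ℕ):ℤ) by push_cast; ring,
      show ((n:ℕ):ℤ) + ((n+1:ℕ):ℤ) = ((2*n+1:ℕ):ℤ) by push_cast; ring,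
      show 2*(n+1)+1 = 2*n+3 by ring,
      qbinom_high (2*n+1) ((2*n+2:ℕ):ℤ) (by push_cast; omega),
      qbinom_nat _ _ (show 2*n+3 ≤ 2*n+3 by omega),
      qbinom_nat _ _ (show 2*n+1 ≤ 2*n+1 by omega),
      show 2*n+3 - (2*n+3) = 0 by omega,
      show 2*n+1 - (2*n+1) = 0 by omega,
      show n+1-(n+1) = 0 by omega,
      qPoch_zero, tri_succ n]
    have n1 := qPoch_ne_zero (2*n+3)
    have n2 := qPoch_ne_zero (2*n+1)
    push_cast
    field_simp
    ring

/-- Symmetric finite form of Jacobi's identity (Theorem 2.2):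
`(q;q)_n^2 = Σ_{k=0}^{n} (-1)^k (2k+1) q^{C(k+1,2)} [2n+1, n+k+1]_q`. -/
theorem finite_jacobi_symmetric (n : ℕ) :
    qPoch n ^ 2 =
      ∑ k ∈ Finset.range (n + 1),
        (-1 : RatFunc ℚ) ^ k * ((2 * k + 1 : ℕ) : RatFunc ℚ) *
          (RatFunc.X : RatFunc ℚ) ^ (k * (k + 1) / 2) *
            qbinom (2 * n + 1) ((n : ℤ) + k + 1) := by
  have key : ∀ n, qPoch n ^ 2 = ∑ k ∈ Finset.range (n + 1), tt n k := by
    intro n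
    induction n with
    | zero =>
      rw [Finset.sum_range_one, tt, show (((0:ℕ)):ℤ) + ((0:ℕ):ℤ) + 1 = ((1:ℕ):ℤ) by norm_num,
        qbinom_nat 1 1 le_rfl]
      simp [qPoch_zero, div_self (qPoch_ne_zero 1)]
    | succ n ih =>
      have hsum : ∑ k ∈ Finset.range (n + 2), (tt (n + 1) k - (1 - Xq ^ (n + 1)) ^ 2 * tt n k)
          = gg n (n + 2) - gg n 0 :=
        Finset.sum_range_sub (fun k => gg n k) (n + 2) ▸
          Finset.sum_congr rfl (fun k hk => step n k (by simpa using Nat.lt_succ_iff.mp (Finset.mem_range.mp hk)))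
      rw [gg_top, gg_zero, sub_zero, Finset.sum_sub_distrib, ← Finset.mul_sum, sub_eq_zero] at hsum
      rw [hsum, Finset.sum_range_succ, tt_top, add_zero, ← ih, qPoch_succ]
      ring
  rw [key]
  rfl
end

section
/- In the ring of formal power series ℤ[[q]], the infinite product ∏_{i=1}^{∞} (1 - q^i)^3 equals Σ_{k=0}^{∞} (-1)^k (2k+1) q^{k(k+1)/2}. -/
open Finset PowerSeries

namespace JacobiAux

noncomputable section

abbrev R := PowerSeries ℤ

/-- Gaussian binomial coefficient as a power series (actually a polynomial). -/
def qb : ℕ → ℕ → R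
  | _, 0 => 1
  | 0, _+1 => 0
  | m+1, k+1 => qb m k + X^(k+1) * qb m (k+1)

@[simp] lemma qb_zero_right (m : ℕ) : qb m 0 = 1 := by cases m <;> rfl

lemma qb_succ_succ (m k : ℕ) : qb (m+1) (k+1) = qb m k + X^(k+1) * qb m (k+1) := rfl

lemma qb_eq_zero : ∀ {m k : ℕ}, m < k → qb m k = 0 := by
  intro m
  induction m with
  | zero => intro k hk; match k, hk with | k+1, _ => rfl
  | succ m ih =>
    intro k hk
    match k, hk with
    | k+1, hk =>
      rw [qb_succ_succ, ih (by omega), ih (by omega)]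
      ring

@[simp] lemma qb_self : ∀ m : ℕ, qb m m = 1 := by
  intro m
  induction m with
  | zero => rfl
  | succ m ih => rw [qb_succ_succ, ih, qb_eq_zero (by omega)]; ring

/-- The second Pascal recurrence. -/
lemma qb_pascal2 : ∀ m k : ℕ, qb (m+1) (k+1) = qb m (k+1) + X^(m-k) * qb m k := by
  intro m
  induction m with
  | zero =>
    intro k
    cases k with
    | zero => simp [qb_succ_succ, qb_eq_zero]
    | succ k =>
      rw [qb_succ_succ]
      rw [qb_eq_zero (show 0 < k+1 by omega), qb_eq_zero (show 0 < k+2 by omega)]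
      ring
  | succ m ih =>
    intro k
    rcases Nat.lt_or_ge (m+1) k with hk | hk
    · rw [qb_eq_zero (by omega), qb_eq_zero (by omega), qb_eq_zero (by omega)]; ring
    rcases Nat.eq_or_lt_of_le hk with rfl | hk
    · rw [qb_self, qb_eq_zero (by omega), qb_self]; simp
    -- now k ≤ m
    have hkm : k ≤ m := by omega
    cases k with
    | zero =>
      conv_lhs => rw [qb_succ_succ, ih 0]
      conv_rhs => rw [qb_succ_succ]
      simp only [qb_zero_right, Nat.sub_zero]
      have e : (X : R)^(0+1) * X^m = X^(m+1) := by
        rw [← pow_add]; congr 1; omega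
      linear_combination e
    | succ k =>
      conv_lhs => rw [qb_succ_succ, ih k, ih (k+1)]
      conv_rhs => rw [qb_succ_succ, qb_succ_succ]
      have e : (X : R)^(k+1+1) * X^(m-(k+1)) = X^(m+1-(k+1)) * X^(k+1) := by
        rw [← pow_add, ← pow_add]; congr 1; omega
      rw [show m - k = m + 1 - (k+1) by omega]
      linear_combination e * qb m (k+1)

/-- `(q;q)_n`. -/
def pch (n : ℕ) : R := ∏ i ∈ range n, (1 - X^(i+1))

@[simp] lemma pch_zero : pch 0 = 1 := by simp [pch]

lemma pch_succ (n : ℕ) : pch (n+1) = pch n * (1 - X^(n+1)) := by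
  rw [pch, prod_range_succ]; rfl

/-- The product formula for Gaussian binomials. -/
lemma qb_mul_pch : ∀ m k : ℕ, k ≤ m → qb m k * (pch k * pch (m - k)) = pch m := by
  intro m
  induction m with
  | zero => intro k hk; interval_cases k; simp
  | succ m ih =>
    intro k hk
    cases k with
    | zero => simp
    | succ k =>
      rcases Nat.eq_or_lt_of_le hk with heq | hlt
      · obtain rfl : k = m := by omega
        simp
      -- k + 1 ≤ m
      have hkm : k + 1 ≤ m := by omega
      rw [qb_succ_succ, add_mul]
      have h1 : qb m k * (pch (k+1) * pch (m + 1 - (k+1))) = (1 - X^(k+1)) * pch m := by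
        rw [pch_succ, show m + 1 - (k+1) = m - k by omega]
        have := ih k (by omega)
        linear_combination (1 - (X:R)^(k+1)) * this
      have h2 : X^(k+1) * qb m (k+1) * (pch (k+1) * pch (m + 1 - (k+1))) =
          (X^(k+1) - X^(m+1)) * pch m := by
        rw [show m + 1 - (k+1) = (m - (k+1)) + 1 by omega]
        have hp : pch (m - (k+1) + 1) = pch (m - (k+1)) * (1 - X^(m-(k+1)+1)) := pch_succ _
        have := ih (k+1) hkm
        have e : (X:R)^(k+1) * X^(m - (k+1) + 1) = X^(m+1) := by
          rw [← pow_add]; congr 1; omega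
        linear_combination (X:R)^(k+1) * qb m (k+1) * pch (k+1) * hp
          + (X:R)^(k+1) * (1 - X^(m - (k+1) + 1)) * this - pch m * e
      rw [h1, h2, pch_succ]
      ring

/-- Triangular numbers. -/
def tri : ℕ → ℕ
  | 0 => 0
  | n+1 => tri n + (n+1)

lemma tri_succ (n : ℕ) : tri (n+1) = tri n + (n+1) := rfl

lemma two_tri (n : ℕ) : 2 * tri n = n * (n+1) := by
  induction n with
  | zero => rfl
  | succ n ih => rw [tri_succ]; ring_nf; ring_nf at ih; omega

lemma tri_eq (n : ℕ) : tri n = n * (n+1) / 2 := by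
  have := two_tri n; omega

lemma le_tri (n : ℕ) : n ≤ tri n := by
  induction n with
  | zero => simp [tri]
  | succ n ih => rw [tri_succ]; omega

/-- Exponent of `q` on the `t`-th term: `e(t - n)` where `e(j) = j(j+1)/2` for `j ∈ ℤ`. -/
def E (n t : ℕ) : ℕ := if n ≤ t then tri (t - n) else tri (n - t - 1)

/-- Summand of the finite Jacobi sum. -/
def B (n t : ℕ) : R := qb (2*n) t * X^(E n t)

lemma B_eq_zero {n t : ℕ} (h : 2*n < t) : B n t = 0 := by
  rw [B, qb_eq_zero h, zero_mul]

lemma E_shift (n t : ℕ) : E (n+1) (t+2) = E n (t+1) := by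
  unfold E
  rcases le_or_gt n (t+1) with h | h
  · rw [if_pos (by omega), if_pos h]; congr 1; omega
  · rw [if_neg (by omega), if_neg (by omega)]; congr 1; omega

lemma E_left (n t : ℕ) : t + 2 + E (n+1) (t+2) = n + E n (t+2) := by
  unfold E
  rcases le_or_gt n (t+1) with h | h
  · rw [if_pos (by omega), if_pos (by omega), show t+2-(n+1) = t+1-n by omega,
      show t+2-n = (t+1-n)+1 by omega, tri_succ]
    omega
  · rcases Nat.eq_or_lt_of_le h with heq | h2
    · rw [if_neg (by omega), if_pos (by omega), show n+1-(t+2)-1 = 0 by omega,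
        show t+2-n = 0 by omega]
      simp [tri]; omega
    · rw [if_neg (by omega), if_neg (by omega),
        show n+1-(t+2)-1 = (n-(t+2)-1)+1 by omega, tri_succ]
      omega

lemma E_right (n t : ℕ) (ht : t ≤ 2*n) : 2*n - t + E (n+1) (t+2) = n + 1 + E n t := by
  unfold E
  rcases le_or_gt n t with h | h
  · rw [if_pos (by omega), if_pos h, show t+2-(n+1) = (t-n)+1 by omega, tri_succ]
    omega
  · rcases Nat.eq_or_lt_of_le h with heq | h2
    · rw [if_pos (by omega), if_neg (by omega), show t+2-(n+1) = 0 by omega,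
        show n-t-1 = 0 by omega]
      simp [tri]; omega
    · rw [if_neg (by omega), if_neg (by omega),
        show n+1-(t+2)-1 = n-t-2 by omega, show n-t-1 = (n-t-2)+1 by omega, tri_succ]
      rw [show n-t-2 = n-t-2 from rfl]
      omega

lemma E_0 (n : ℕ) : E (n+1) 0 = n + E n 0 := by
  unfold E
  cases n with
  | zero => simp [tri]
  | succ m =>
    rw [if_neg (by omega), if_neg (by omega), show m+1+1-0-1 = m+1 by omega,
      show m+1-0-1 = m by omega, tri_succ]
    omega

lemma E_10 (n : ℕ) : E (n+1) 1 = E n 0 := by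
  unfold E
  cases n with
  | zero => simp
  | succ m =>
    rw [if_neg (by omega), if_neg (by omega)]
    congr 1

lemma E_11 (n : ℕ) : 1 + E (n+1) 1 = n + E n 1 := by
  unfold E
  cases n with
  | zero => simp [tri]
  | succ m =>
    cases m with
    | zero => simp [tri]
    | succ p =>
      rw [if_neg (by omega), if_neg (by omega), show p+1+1+1-1-1 = p+1 by omega,
        show p+1+1-1-1 = p by omega, tri_succ]
      omega

lemma B_rec0 (n : ℕ) : B (n+1) 0 = X^n * B n 0 := by
  unfold B
  rw [qb_zero_right, qb_zero_right]
  rw [one_mul, one_mul, ← pow_add, ← E_0]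

lemma B_rec1 (n : ℕ) : B (n+1) 1 = X^n * B n 1 + (1 + X^(2*n+1)) * B n 0 := by
  unfold B
  have hq : qb (2*(n+1)) 1 = 1 + X * qb (2*n) 1 + X^(2*n+1) := by
    rw [show 2*(n+1) = 2*n+1+1 by ring, show (1:ℕ) = 0+1 from rfl, qb_succ_succ]
    rw [qb_pascal2 (2*n) 0]
    rw [qb_zero_right, qb_zero_right]
    have e : (X:R)^(0+1) * X^(2*n-0) = X^(2*n+1) := by
      rw [← pow_add]; congr 1; omega
    linear_combination e
  rw [hq]
  have e1 : (X:R)^(E (n+1) 1) = X^(E n 0) := by rw [E_10]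
  have e2 : (X:R) * X^(E (n+1) 1) = X^n * X^(E n 1) := by
    rw [← pow_succ', ← pow_add]
    congr 1
    have := E_11 n
    omega
  rw [qb_zero_right]
  linear_combination (1 + (X:R)^(2*n+1)) * e1 + qb (2*n) 1 * e2

lemma B_rec2 (n t : ℕ) :
    B (n+1) (t+2) = X^n * B n (t+2) + (1 + X^(2*n+1)) * B n (t+1) + X^(n+1) * B n t := by
  rcases Nat.lt_or_ge (2*n) t with h | ht
  · rw [B_eq_zero (by omega), B_eq_zero (by omega), B_eq_zero (by omega),
      B_eq_zero (by omega)]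
    ring
  rcases Nat.eq_or_lt_of_le ht with heq | hlt
  · -- t = 2*n
    subst heq
    rw [show B n (2*n+2) = 0 from B_eq_zero (by omega),
      show B n (2*n+1) = 0 from B_eq_zero (by omega)]
    unfold B
    rw [show 2*(n+1) = 2*n+2 by ring, qb_self, qb_self]
    have hE : E (n+1) (2*n+2) = n+1 + E n (2*n) := by
      unfold E
      rw [if_pos (by omega), if_pos (by omega), show 2*n+2-(n+1) = n+1 by omega,
        show 2*n-n = n by omega, tri_succ]
      omega
    rw [hE, pow_add]
    ring
  · -- t < 2*n
    have hq : qb (2*(n+1)) (t+2)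
        = X^(t+2) * qb (2*n) (t+2) + (1 + X^(2*n+1)) * qb (2*n) (t+1)
          + X^(2*n - t) * qb (2*n) t := by
      have s1 : qb (2*n+1+1) (t+1+1) = qb (2*n+1) (t+1) + X^(t+1+1) * qb (2*n+1) (t+1+1) :=
        qb_succ_succ _ _
      have s2 : qb (2*n+1) (t+1) = qb (2*n) (t+1) + X^(2*n - t) * qb (2*n) t :=
        qb_pascal2 (2*n) t
      have s3 : qb (2*n+1) (t+2) = qb (2*n) (t+2) + X^(2*n - (t+1)) * qb (2*n) (t+1) :=
        qb_pascal2 (2*n) (t+1)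
      have e : (X:R)^(t+2) * X^(2*n-(t+1)) = X^(2*n+1) := by
        rw [← pow_add]; congr 1; omega
      rw [show 2*(n+1) = 2*n+1+1 by ring, show t+2 = t+1+1 from rfl, s1]
      rw [show t+1+1 = t+2 from rfl, s2, s3]
      linear_combination qb (2*n) (t+1) * e
    unfold B
    rw [hq]
    have E1 : (X:R)^(t+2) * X^(E (n+1) (t+2)) = X^n * X^(E n (t+2)) := by
      rw [← pow_add, ← pow_add]; congr 1; exact E_left n t
    have E2 : (X:R)^(E (n+1) (t+2)) = X^(E n (t+1)) := by rw [E_shift]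
    have E3 : (X:R)^(2*n - t) * X^(E (n+1) (t+2)) = X^(n+1) * X^(E n t) := by
      rw [← pow_add, ← pow_add]; congr 1; exact E_right n t ht
    linear_combination qb (2*n) (t+2) * E1 + (1 + (X:R)^(2*n+1)) * qb (2*n) (t+1) * E2
      + qb (2*n) t * E3

lemma sum_shift (L : ℕ) (f : ℕ → R) :
    ∑ t ∈ range (L+1), f (t+1) = (∑ t ∈ range (L+1), f t) + f (L+1) - f 0 := by
  have h1 := Finset.sum_range_succ f (L+1)
  have h2 := Finset.sum_range_succ' f (L+1)
  linear_combination h1 - h2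

lemma alt1 (L : ℕ) (g : ℕ → R) (h : g (L+1) = 0) :
    ∑ t ∈ range (L+1), C (R := ℤ) ((-1)^t) * g (t+1)
      = g 0 - ∑ t ∈ range (L+1), C (R := ℤ) ((-1)^t) * g t := by
  have key := sum_shift L (fun t => C (R := ℤ) ((-1)^t) * g t)
  have e1 : ∑ t ∈ range (L+1), C (R := ℤ) ((-1:ℤ)^(t+1)) * g (t+1)
      = ∑ t ∈ range (L+1), -(C (R := ℤ) ((-1:ℤ)^t) * g (t+1)) := by
    refine Finset.sum_congr rfl (fun t _ => ?_)
    rw [pow_succ, map_mul, map_neg, map_one]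
    ring
  rw [e1] at key
  rw [Finset.sum_neg_distrib] at key
  rw [h] at key
  simp only [pow_zero, map_one, one_mul, mul_zero, add_zero] at key
  linear_combination -key

lemma alt2 (L : ℕ) (g : ℕ → R) (h1 : g (L+1) = 0) (h2 : g (L+2) = 0) :
    ∑ t ∈ range (L+1), C (R := ℤ) ((-1)^t) * g (t+2)
      = (∑ t ∈ range (L+1), C (R := ℤ) ((-1)^t) * g t) - g 0 + g 1 := by
  have k1 := alt1 L (fun t => g (t+1)) (by simpa using h2)
  have k2 := alt1 L g h1
  rw [k2] at k1
  have k1' : ∑ t ∈ range (L+1), C (R := ℤ) ((-1:ℤ)^t) * g (t+2)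
      = g 1 - (g 0 - ∑ t ∈ range (L+1), C (R := ℤ) ((-1)^t) * g t) := k1
  linear_combination k1'

/-- `U n = Σ (-1)^t B n t`. -/
def U (n : ℕ) : R := ∑ t ∈ range (2*n+1), C (R := ℤ) ((-1)^t) * B n t

/-- `V n = Σ (-1)^t t B n t`. -/
def V (n : ℕ) : R := ∑ t ∈ range (2*n+1), C (R := ℤ) ((-1)^t * t) * B n t

lemma U_succ (n : ℕ) : U (n+1) = (X^n + X^(n+1) - 1 - X^(2*n+1)) * U n := by
  have hz1 : B n (2*n+1) = 0 := B_eq_zero (by omega)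
  have hz2 : B n (2*n+2) = 0 := B_eq_zero (by omega)
  have hA1 := alt1 (2*n) (B n) hz1
  have hA2 := alt2 (2*n) (B n) hz1 hz2
  rw [U, U, show 2*(n+1)+1 = (2*n+1+1)+1 by ring, Finset.sum_range_succ',
    Finset.sum_range_succ']
  have expand : ∀ t ∈ range (2*n+1), C (R := ℤ) ((-1:ℤ)^(t+1+1)) * B (n+1) (t+1+1)
      = X^n * (C (R := ℤ) ((-1)^t) * B n (t+2)) + (1+X^(2*n+1)) * (C (R := ℤ) ((-1)^t) * B n (t+1))
        + X^(n+1) * (C (R := ℤ) ((-1)^t) * B n t) := by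
    intro t _
    have hs : ((-1:ℤ)^(t+1+1)) = (-1)^t := by ring
    rw [hs, show t+1+1 = t+2 from rfl, B_rec2]
    ring
  rw [Finset.sum_congr rfl expand]
  rw [Finset.sum_add_distrib, Finset.sum_add_distrib, ← Finset.mul_sum, ← Finset.mul_sum,
    ← Finset.mul_sum]
  rw [hA1, hA2, B_rec1, B_rec0]
  simp only [pow_zero, pow_one, map_one, one_mul]
  have hsg : C (R := ℤ) ((-1:ℤ)^(0+1)) = -1 := by simp
  rw [hsg]
  ring

lemma V_succ (n : ℕ) : V (n+1) = (X^n + X^(n+1) - 1 - X^(2*n+1)) * V n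
    + (2*X^(n+1) - 1 - X^(2*n+1)) * U n := by
  have hz1 : B n (2*n+1) = 0 := B_eq_zero (by omega)
  have hz2 : B n (2*n+2) = 0 := B_eq_zero (by omega)
  set f : ℕ → R := fun t => C (R := ℤ) ((-1)^t * t) * B n t with hf
  set g : ℕ → R := fun t => C (R := ℤ) ((-1)^t) * B n t with hg
  have hf1 : f (2*n+1) = 0 := by rw [hf]; simp only; rw [hz1, mul_zero]
  have hf2 : f (2*n+2) = 0 := by rw [hf]; simp only; rw [hz2, mul_zero]
  have hg1 : g (2*n+1) = 0 := by rw [hg]; simp only; rw [hz1, mul_zero]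
  have hf0 : f 0 = 0 := by rw [hf]; simp
  have hfone : f 1 = - B n 1 := by rw [hf]; simp
  have hg0 : g 0 = B n 0 := by rw [hg]; simp
  have d2 := sum_shift (2*n) f
  have d1 := sum_shift (2*n) (fun t => f (t+1))
  have e1 := sum_shift (2*n) g
  rw [hf1, hf0] at d2
  rw [show (2*n+1)+1 = 2*n+2 from rfl, hf2, hfone] at d1
  rw [hg1, hg0] at e1
  -- A2
  have A2 : ∑ t ∈ range (2*n+1), C (R := ℤ) ((-1:ℤ)^t * ((t:ℤ)+2)) * B n (t+2)
      = (∑ t ∈ range (2*n+1), f t) + B n 1 := by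
    have pt : ∀ t ∈ range (2*n+1), C (R := ℤ) ((-1:ℤ)^t * ((t:ℤ)+2)) * B n (t+2) = f (t+1+1) := by
      intro t _
      rw [hf]; simp only
      congr 2
      push_cast
      ring
    rw [Finset.sum_congr rfl pt, d1, d2]
    ring
  -- A1
  have A1 : ∑ t ∈ range (2*n+1), C (R := ℤ) ((-1:ℤ)^t * ((t:ℤ)+2)) * B n (t+1)
      = B n 0 - (∑ t ∈ range (2*n+1), f t) - (∑ t ∈ range (2*n+1), g t) := by
    have pt : ∀ t ∈ range (2*n+1), C (R := ℤ) ((-1:ℤ)^t * ((t:ℤ)+2)) * B n (t+1)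
        = -(f (t+1)) - g (t+1) := by
      intro t _
      rw [hf, hg]; simp only
      rw [← neg_mul, ← sub_mul, ← map_neg, ← map_sub]
      congr 2
      push_cast
      ring
    rw [Finset.sum_congr rfl pt, Finset.sum_sub_distrib, Finset.sum_neg_distrib, d2, e1]
    ring
  -- A0
  have A0 : ∑ t ∈ range (2*n+1), C (R := ℤ) ((-1:ℤ)^t * ((t:ℤ)+2)) * B n t
      = (∑ t ∈ range (2*n+1), f t) + 2 * (∑ t ∈ range (2*n+1), g t) := by
    have pt : ∀ t ∈ range (2*n+1), C (R := ℤ) ((-1:ℤ)^t * ((t:ℤ)+2)) * B n t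
        = f t + 2 * (g t) := by
      intro t _
      rw [hf, hg]; simp only
      rw [show (2:R) = C (R := ℤ) 2 by simp, ← mul_assoc, ← map_mul, ← add_mul, ← map_add]
      congr 2
      push_cast
      ring
    rw [Finset.sum_congr rfl pt, Finset.sum_add_distrib, ← Finset.mul_sum]
  -- main expansion
  rw [V, show 2*(n+1)+1 = (2*n+1+1)+1 by ring, Finset.sum_range_succ',
    Finset.sum_range_succ']
  have expand : ∀ t ∈ range (2*n+1), C (R := ℤ) ((-1:ℤ)^(t+1+1) * ((t+1+1 : ℕ) : ℤ)) * B (n+1) (t+1+1)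
      = X^n * (C (R := ℤ) ((-1)^t * ((t:ℤ)+2)) * B n (t+2))
        + (1+X^(2*n+1)) * (C (R := ℤ) ((-1)^t * ((t:ℤ)+2)) * B n (t+1))
        + X^(n+1) * (C (R := ℤ) ((-1)^t * ((t:ℤ)+2)) * B n t) := by
    intro t _
    rw [show t+1+1 = t+2 from rfl, B_rec2,
      show ((-1:ℤ)^(t+2) * ((t+2 : ℕ) : ℤ)) = (-1)^t * ((t:ℤ)+2) by push_cast; ring]
    ring
  rw [Finset.sum_congr rfl expand]
  rw [Finset.sum_add_distrib, Finset.sum_add_distrib, ← Finset.mul_sum, ← Finset.mul_sum,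
    ← Finset.mul_sum]
  rw [A2, A1, A0, B_rec1]
  have hb1 : C (R := ℤ) ((-1:ℤ)^(0+1) * ((0+1 : ℕ) : ℤ)) * B (n+1) (0+1) = -(X^n * B n 1 + (1 + X^(2*n+1)) * B n 0) := by
    rw [show B (n+1) (0+1) = B (n+1) 1 from rfl, B_rec1]
    simp
  have hb0 : C (R := ℤ) ((-1:ℤ)^0 * ((0 : ℕ) : ℤ)) * B (n+1) 0 = 0 := by simp
  rw [show C (R := ℤ) ((-1:ℤ)^(0+1) * ((0+1 : ℕ) : ℤ)) = -1 by simp,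
    show C (R := ℤ) ((-1:ℤ)^0 * ((0:ℕ):ℤ)) = 0 by simp]
  rw [U, V]
  simp only [hf, hg]
  ring

lemma U_zero : U 0 = 1 := by
  rw [U]
  simp [B, E, tri]

lemma U_pos : ∀ n : ℕ, U (n+1) = 0 := by
  intro n
  induction n with
  | zero =>
    rw [U_succ, show ((X:R)^0 + X^(0+1) - 1 - X^(2*0+1)) = 0 by ring, zero_mul]
  | succ n ih => rw [U_succ, ih, mul_zero]

lemma V_val : ∀ n : ℕ, V (n+1) = C (R := ℤ) ((-1)^(n+1)) * (pch (n+1) * pch n) := by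
  intro n
  induction n with
  | zero =>
    rw [V_succ, show ((X:R)^0 + X^(0+1) - 1 - X^(2*0+1)) = 0 by ring, zero_mul, U_zero]
    rw [pch_succ, pch_zero]
    simp
    ring
  | succ n ih =>
    rw [V_succ, ih, U_pos, mul_zero, add_zero, pch_succ (n+1), pch_succ n]
    have hC : (C (R := ℤ) ((-1:ℤ)^(n+1+1)) : R) = - C (R := ℤ) ((-1)^(n+1)) := by
      rw [pow_succ, map_mul]
      simp
    rw [hC]
    ring

/-- The key exact identity: the finite Jacobi sum equals `2 (q;q)_{n+1} (q;q)_n`. -/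
lemma key (n : ℕ) :
    ∑ t ∈ range (2*(n+1)+1), C (R := ℤ) ((-1)^(n+1+t) * (2*(t:ℤ) - 2*(n+1) + 1)) * B (n+1) t
      = 2 * (pch (n+1) * pch n) := by
  have pt : ∀ t ∈ range (2*(n+1)+1),
      C (R := ℤ) ((-1:ℤ)^(n+1+t) * (2*(t:ℤ) - 2*(n+1) + 1)) * B (n+1) t
      = (C (R := ℤ) ((-1:ℤ)^(n+1) * 2)) * (C (R := ℤ) ((-1)^t * t) * B (n+1) t)
        + (C (R := ℤ) ((-1:ℤ)^(n+1) * (-(2*(n:ℤ)+1)))) * (C (R := ℤ) ((-1)^t) * B (n+1) t) := by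
    intro t _
    rw [← mul_assoc, ← mul_assoc, ← map_mul, ← map_mul, ← add_mul, ← map_add]
    congr 2
    rw [pow_add]
    push_cast
    ring
  rw [Finset.sum_congr rfl pt, Finset.sum_add_distrib, ← Finset.mul_sum, ← Finset.mul_sum,
    ← V, ← U, V_val, U_pos, mul_zero, add_zero, ← mul_assoc, ← map_mul]
  have ha : ((-1:ℤ)^(n+1) * 2) * ((-1)^(n+1)) = 2 := by
    have h2 : ((-1:ℤ)^(n+1)) * ((-1)^(n+1)) = 1 := by
      rw [← pow_add, show (n+1)+(n+1) = 2*(n+1) by ring, pow_mul]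
      norm_num
    linear_combination 2 * h2
  rw [ha]
  norm_num

lemma dvd_mul_sub_mul {w : ℕ} {f g f' g' : R} (h : X^w ∣ f - g) (h' : X^w ∣ f' - g') :
    X^w ∣ f * f' - g * g' := by
  obtain ⟨a, ha⟩ := h
  obtain ⟨b, hb⟩ := h'
  exact ⟨a * f' + g * b, by linear_combination f' * ha + g * hb⟩

lemma pch_dvd (a b : ℕ) (h : a ≤ b) : X^(a+1) ∣ pch b - pch a := by
  induction b, h using Nat.le_induction with
  | base => simp
  | succ b hb ih =>
    rw [pch_succ]
    have h2 : (X:R)^(a+1) ∣ pch b * X^(b+1) :=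
      Dvd.dvd.mul_left (pow_dvd_pow X (by omega)) _
    obtain ⟨c, hc⟩ := ih
    obtain ⟨d, hd⟩ := h2
    exact ⟨c - d, by linear_combination hc - hd⟩

lemma isUnit_pch (m : ℕ) : IsUnit (pch m) := by
  rw [PowerSeries.isUnit_iff_constantCoeff]
  have : constantCoeff (R := ℤ) (pch m) = 1 := by
    rw [pch, map_prod]
    apply Finset.prod_eq_one
    intro i _
    simp
  rw [this]
  exact isUnit_one

lemma unit_cancel {w : ℕ} {u c : R} (hu : IsUnit u) (h : X^w ∣ c * u) : X^w ∣ c := by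
  have h2 := Dvd.dvd.mul_right h (↑hu.unit⁻¹)
  rwa [mul_assoc, IsUnit.mul_val_inv hu, mul_one] at h2

lemma term_dvd (n t : ℕ) (ht : t ≤ 2*n) :
    X^n ∣ X^(E n t) * (qb (2*n) t * pch n) - X^(E n t) := by
  have split : X^(E n t) * (qb (2*n) t * pch n) - X^(E n t)
      = X^(E n t) * (qb (2*n) t * (pch n - pch t))
        + X^(E n t) * (qb (2*n) t * pch t - 1) := by ring
  rw [split]
  apply dvd_add
  · rcases le_or_gt t n with h | h
    · have hd : (X:R)^(t+1) ∣ qb (2*n) t * (pch n - pch t) :=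
        Dvd.dvd.mul_left (pch_dvd t n h) _
      have hle : n ≤ E n t + (t+1) := by
        unfold E
        rcases le_or_gt n t with h' | h'
        · rw [if_pos h']; omega
        · rw [if_neg (by omega)]
          have := le_tri (n - t - 1)
          omega
      exact dvd_trans (pow_dvd_pow X hle) (by rw [pow_add]; exact mul_dvd_mul_left _ hd)
    · have hd : (X:R)^n ∣ pch n - pch t := by
        rw [dvd_sub_comm]
        exact dvd_trans (pow_dvd_pow X (Nat.le_succ n)) (pch_dvd n t (le_of_lt h))
      exact Dvd.dvd.mul_left (Dvd.dvd.mul_left hd _) _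
  · have exact1 : (qb (2*n) t * pch t - 1) * pch (2*n - t) = pch (2*n) - pch (2*n - t) := by
      have h0 := qb_mul_pch (2*n) t ht
      linear_combination h0
    have hd : (X:R)^(2*n - t + 1) ∣ (qb (2*n) t * pch t - 1) * pch (2*n - t) := by
      rw [exact1]
      exact pch_dvd (2*n - t) (2*n) (by omega)
    have hd2 : (X:R)^(2*n - t + 1) ∣ (qb (2*n) t * pch t - 1) :=
      unit_cancel (isUnit_pch _) hd
    have hle : n ≤ E n t + (2*n - t + 1) := by
      unfold E
      rcases le_or_gt n t with h' | h'
      · rw [if_pos h']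
        have := le_tri (t - n)
        omega
      · rw [if_neg (by omega)]; omega
    exact dvd_trans (pow_dvd_pow X hle) (by rw [pow_add]; exact mul_dvd_mul_left _ hd2)

lemma sum_dvd (N : ℕ) :
    X^(N+1) ∣ pch (N+1) * (∑ t ∈ range (2*(N+1)+1),
        C (R := ℤ) ((-1)^(N+1+t) * (2*(t:ℤ) - 2*(N+1) + 1)) * B (N+1) t)
      - ∑ t ∈ range (2*(N+1)+1),
          C (R := ℤ) ((-1)^(N+1+t) * (2*(t:ℤ) - 2*(N+1) + 1)) * X^(E (N+1) t) := by
  rw [Finset.mul_sum, ← Finset.sum_sub_distrib]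
  apply Finset.dvd_sum
  intro t htm
  have ht : t ≤ 2*(N+1) := by
    have := Finset.mem_range.mp htm
    omega
  obtain ⟨a, ha⟩ := term_dvd (N+1) t ht
  refine ⟨C (R := ℤ) ((-1)^(N+1+t) * (2*(t:ℤ) - 2*(N+1) + 1)) * a, ?_⟩
  rw [B]
  linear_combination (C (R := ℤ) ((-1:ℤ)^(N+1+t) * (2*(t:ℤ) - 2*(N+1) + 1))) * ha

lemma sum_E (n : ℕ) :
    ∑ t ∈ range (2*(n+1)+1), C (R := ℤ) ((-1)^(n+1+t) * (2*(t:ℤ) - 2*(n+1) + 1)) * X^(E (n+1) t)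
      = 2 * (∑ k ∈ range (n+1), C (R := ℤ) ((-1)^k * (2*(k:ℤ)+1)) * X^(tri k))
        + C (R := ℤ) ((-1)^(n+1) * (2*(((n+1:ℕ)):ℤ)+1)) * X^(tri (n+1)) := by
  rw [show 2*(n+1)+1 = (n+1) + ((n+1)+1) by ring, Finset.sum_range_add]
  have pieceA : ∑ t ∈ range (n+1), C (R := ℤ) ((-1:ℤ)^(n+1+t) * (2*(t:ℤ) - 2*((n:ℤ)+1) + 1)) * X^(E (n+1) t)
      = ∑ k ∈ range (n+1), C (R := ℤ) ((-1:ℤ)^k * (2*(k:ℤ)+1)) * X^(tri k) := by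
    rw [← Finset.sum_range_reflect]
    refine Finset.sum_congr rfl (fun k hk => ?_)
    have hkm : k < n+1 := Finset.mem_range.mp hk
    obtain ⟨j, hj⟩ : ∃ j, n+1 = k + 1 + j := ⟨n - k, by omega⟩
    rw [show n+1-1-k = j by omega]
    have hsgn : (-1:ℤ)^(n+1+j) = -(-1)^k := by
      rw [show n+1+j = k + (2*j+1) by omega, pow_add, pow_add, pow_mul]
      norm_num
    have hE : E (n+1) j = tri k := by
      unfold E
      rw [if_neg (by omega), show n+1-j-1 = k by omega]
    rw [hE, hsgn]
    congr 2
    have hmz : (j:ℤ) = (n:ℤ) - (k:ℤ) := by omega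
    linear_combination (-2*(-1:ℤ)^k) * hmz
  have pieceB : ∑ k ∈ range ((n+1)+1),
        C (R := ℤ) ((-1:ℤ)^(n+1+((n+1)+k)) * (2*((((n+1)+k:ℕ)):ℤ) - 2*((n:ℤ)+1) + 1)) * X^(E (n+1) ((n+1)+k))
      = (∑ k ∈ range (n+1), C (R := ℤ) ((-1:ℤ)^k * (2*(k:ℤ)+1)) * X^(tri k))
        + C (R := ℤ) ((-1:ℤ)^(n+1) * (2*(((n+1:ℕ)):ℤ)+1)) * X^(tri (n+1)) := by
    have hpt : ∀ k ∈ range ((n+1)+1),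
        C (R := ℤ) ((-1:ℤ)^(n+1+((n+1)+k)) * (2*((((n+1)+k:ℕ)):ℤ) - 2*((n:ℤ)+1) + 1)) * X^(E (n+1) ((n+1)+k))
        = C (R := ℤ) ((-1:ℤ)^k * (2*(k:ℤ)+1)) * X^(tri k) := by
      intro k _
      have hsgn : (-1:ℤ)^(n+1+((n+1)+k)) = (-1)^k := by
        rw [show n+1+((n+1)+k) = 2*(n+1) + k by ring, pow_add, pow_mul]
        norm_num
      have hE : E (n+1) ((n+1)+k) = tri k := by
        unfold E
        rw [if_pos (by omega), show (n+1)+k-(n+1) = k by omega]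
      rw [hE, hsgn]
      congr 2
      push_cast
      ring
    rw [Finset.sum_congr rfl hpt, Finset.sum_range_succ]
  rw [pieceA, pieceB]
  ring

end

end JacobiAux

open JacobiAux in
/-- Jacobi's identity `(q;q)_∞^3 = Σ_{k≥0} (-1)^k (2k+1) q^{k(k+1)/2}` in `ℤ[[q]]`,
stated coefficientwise: for every `N`, the coefficient of `q^N` in any sufficiently
long truncation `∏_{i=1}^{M} (1-q^i)^3` (any `M ≥ N`) equals the coefficient of `q^N`
in `Σ_{k=0}^{N} (-1)^k (2k+1) q^{k(k+1)/2}` (the terms with `k > N` do not contribute). -/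
theorem jacobi_identity (N M : ℕ) (h : N ≤ M) :
    (PowerSeries.coeff (R := ℤ) N) (∏ i ∈ Finset.range M, (1 - (X : PowerSeries ℤ) ^ (i + 1)) ^ 3) =
      (PowerSeries.coeff (R := ℤ) N)
        (∑ k ∈ Finset.range (N + 1),
          PowerSeries.C (R := ℤ) ((-1) ^ k * (2 * k + 1)) * (X : PowerSeries ℤ) ^ (k * (k + 1) / 2)) := by
  have hkey := key N
  have hsd := sum_dvd N
  rw [hkey, sum_E N] at hsd
  set G : R := ∑ k ∈ range (N+1), C (R := ℤ) ((-1)^k * (2*(k:ℤ)+1)) * X^(tri k) with hG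
  have hlast : (X:R)^(N+1) ∣ C (R := ℤ) ((-1)^(N+1) * (2*((N+1:ℕ):ℤ)+1)) * X^(tri (N+1)) :=
    Dvd.dvd.mul_left (pow_dvd_pow X (le_tri (N+1))) _
  have hMn : (X:R)^(N+1) ∣ pch M - pch (N+1) := by
    obtain ⟨c, hc⟩ := pch_dvd N M h
    obtain ⟨d, hd⟩ := pch_dvd N (N+1) (Nat.le_succ N)
    exact ⟨c - d, by linear_combination hc - hd⟩
  have hMN : (X:R)^(N+1) ∣ pch M - pch N := pch_dvd N M h
  have t1 : (X:R)^(N+1) ∣ pch M ^ 3 - pch (N+1) * pch (N+1) * pch N := by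
    have h3 := JacobiAux.dvd_mul_sub_mul (JacobiAux.dvd_mul_sub_mul hMn hMn) hMN
    have e : pch M * pch M * pch M = pch M ^ 3 := by ring
    rwa [e] at h3
  have big : (X:R)^(N+1) ∣ 2 * pch M ^ 3 - 2 * G := by
    obtain ⟨a, ha⟩ := t1
    obtain ⟨b, hb⟩ := hsd
    obtain ⟨c, hc⟩ := hlast
    exact ⟨2*a + b + c, by linear_combination (2:R) * ha + hb + hc⟩
  have hco := (PowerSeries.X_pow_dvd_iff.mp big) N (lt_add_one N)
  rw [map_sub] at hco
  have h2 : ∀ f : R, (PowerSeries.coeff (R := ℤ) N) (2 * f) = 2 * (PowerSeries.coeff (R := ℤ) N) f := by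
    intro f
    rw [show (2:R) = C (R := ℤ) 2 by simp, PowerSeries.coeff_C_mul]
  rw [h2, h2] at hco
  have hprod : ∏ i ∈ Finset.range M, (1 - (X : PowerSeries ℤ) ^ (i + 1)) ^ 3 = pch M ^ 3 := by
    rw [Finset.prod_pow, pch]
  have hGoal : (∑ k ∈ Finset.range (N + 1),
      PowerSeries.C (R := ℤ) ((-1) ^ k * (2 * k + 1)) * (X : PowerSeries ℤ) ^ (k * (k + 1) / 2)) = G := by
    rw [hG]
    refine Finset.sum_congr rfl (fun k _ => ?_)
    rw [tri_eq]
  rw [hprod, hGoal]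
  omega
end
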